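/- Let G be a finite simple graph with at least two vertices and without isolated vertices. Then ⌈ n(G)/ν(G) ⌉ − 1 ≤ σ(G) ≤ Δ(G), where n(G) is the number of vertices, ν(G) the matching number, and Δ(G) the maximum degree of G. -/
import Mathlib


/-- A star partition of `G`. -/
def IsStarPartition {V : Type*} [Fintype V] [DecidableEq V] (G : SimpleGraph V)
    (P : Finset (Finset V)) : Prop :=
  (∀ v : V, ∃! S : Finset V, S ∈ P ∧ v ∈ S) ∧
  (∀ S ∈ P, 2 ≤ S.card) ∧
  (∀ S ∈ P, ∃ c ∈ S, ∀ v ∈ S, v ≠ c → G.Adj c v)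

/-- The star partition width `σ(G)`: the smallest `k` such that `G` has a
`k`-star partition. -/
noncomputable def starPartitionWidth {V : Type*} [Fintype V] [DecidableEq V]
    (G : SimpleGraph V) : ℕ :=
  sInf {k : ℕ | ∃ P : Finset (Finset V), IsStarPartition G P ∧ ∀ S ∈ P, S.card ≤ k + 1}

/-- A matching of `G`, given as a finite set of pairwise disjoint edges. -/
def IsMatchingSet {V : Type*} (G : SimpleGraph V) (M : Finset (Sym2 V)) : Prop :=
  (∀ e ∈ M, e ∈ G.edgeSet) ∧
  (∀ e ∈ M, ∀ f ∈ M, e ≠ f → ∀ v : V, v ∈ e → v ∉ f)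

/-- The matching number `ν(G)`: the maximum size of a matching in `G`. -/
noncomputable def matchingNumber {V : Type*} (G : SimpleGraph V) : ℕ :=
  sSup {n : ℕ | ∃ M : Finset (Sym2 V), IsMatchingSet G M ∧ M.card = n}

open Finset

section Aux
variable {V : Type*} [Fintype V] [DecidableEq V] (G : SimpleGraph V) [DecidableRel G.Adj]

private lemma key_claim (A : Finset V) (hA : ∀ v ∈ A, ∃ u ∈ A, G.Adj v u) (hAne : A.Nonempty) :
    ∃ S : Finset V, S ⊆ A ∧ 2 ≤ S.card ∧
      (∃ c ∈ S, ∀ v ∈ S, v ≠ c → G.Adj c v) ∧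
      (∀ w ∈ A \ S, ∃ u ∈ A \ S, G.Adj w u) := by
  -- A-neighborhood notation
  have hNne : ∀ w ∈ A, (A ∩ G.neighborFinset w).Nonempty := by
    intro w hw
    obtain ⟨u, hu, hadj⟩ := hA w hw
    exact ⟨u, Finset.mem_inter.mpr ⟨hu, (SimpleGraph.mem_neighborFinset G w u).mpr hadj⟩⟩
  by_cases hpend : ∃ x ∈ A, ∃ w ∈ A, A ∩ G.neighborFinset w = {x}
  · -- Case 1: pendant-like vertex
    obtain ⟨x, hxA, w0, hw0A, hw0N⟩ := hpend
    set L := A.filter (fun w => A ∩ G.neighborFinset w = {x}) with hL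
    have hxL : x ∉ L := by
      intro hx
      have := (Finset.mem_filter.mp hx).2
      have : x ∈ A ∩ G.neighborFinset x := this ▸ Finset.mem_singleton_self x
      simp at this
    have hLne : w0 ∈ L := Finset.mem_filter.mpr ⟨hw0A, hw0N⟩
    have hLadj : ∀ w ∈ L, G.Adj x w := by
      intro w hw
      have h := (Finset.mem_filter.mp hw).2
      have : x ∈ A ∩ G.neighborFinset w := h ▸ Finset.mem_singleton_self x
      have := (Finset.mem_inter.mp this).2
      simp only [SimpleGraph.mem_neighborFinset] at this
      exact this.symm
    refine ⟨insert x L, ?_, ?_, ⟨x, Finset.mem_insert_self _ _, ?_⟩, ?_⟩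
    · intro y hy
      rcases Finset.mem_insert.mp hy with rfl | hy
      · exact hxA
      · exact (Finset.mem_filter.mp hy).1
    · rw [Finset.card_insert_of_notMem hxL]
      have : 0 < L.card := Finset.card_pos.mpr ⟨w0, hLne⟩
      omega
    · intro v hv hvx
      rcases Finset.mem_insert.mp hv with rfl | hv
      · exact absurd rfl hvx
      · exact hLadj v hv
    · intro w hw
      obtain ⟨hwA, hwS⟩ := Finset.mem_sdiff.mp hw
      have hwx : w ≠ x := fun h => hwS (h ▸ Finset.mem_insert_self _ _)
      have hwL : w ∉ L := fun h => hwS (Finset.mem_insert_of_mem h)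
      -- helper: a vertex z in A ∩ N(w') with z in L forces w' = x
      have hLnbr : ∀ w' z, z ∈ L → w' ∈ A → G.Adj w' z → w' = x := by
        intro w' z hz hw'A hadj
        have h := (Finset.mem_filter.mp hz).2
        have : w' ∈ A ∩ G.neighborFinset z :=
          Finset.mem_inter.mpr ⟨hw'A, (SimpleGraph.mem_neighborFinset G z w').mpr hadj.symm⟩
        rw [h] at this
        exact Finset.mem_singleton.mp this
      obtain ⟨u, huA, hadj⟩ := hA w hwA
      by_cases huS : u ∈ insert x L
      · rcases Finset.mem_insert.mp huS with rfl | huL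
        · -- u = x; w is adjacent to x but w ∉ L so it has another A-neighbor
          have hne : A ∩ G.neighborFinset w ≠ {u} := fun h => hwL (Finset.mem_filter.mpr ⟨hwA, h⟩)
          have hu_mem : u ∈ A ∩ G.neighborFinset w :=
            Finset.mem_inter.mpr ⟨huA, (SimpleGraph.mem_neighborFinset G w u).mpr hadj⟩
          have : ∃ z ∈ A ∩ G.neighborFinset w, z ≠ u := by
            by_contra hcon
            push_neg at hcon
            exact hne (Finset.eq_singleton_iff_unique_mem.mpr ⟨hu_mem, fun z hz => hcon z hz⟩)
          obtain ⟨z, hz, hzu⟩ := this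
          obtain ⟨hzA, hzN⟩ := Finset.mem_inter.mp hz
          have hzadj : G.Adj w z := (SimpleGraph.mem_neighborFinset G w z).mp hzN
          refine ⟨z, Finset.mem_sdiff.mpr ⟨hzA, ?_⟩, hzadj⟩
          intro hzS
          rcases Finset.mem_insert.mp hzS with rfl | hzL
          · exact hzu rfl
          · exact hwx (hLnbr w z hzL hwA hzadj)
        · exact absurd (hLnbr w u huL hwA hadj) hwx
      · exact ⟨u, Finset.mem_sdiff.mpr ⟨huA, huS⟩, hadj⟩
  · -- Case 2: no vertex has a unique A-neighbor
    push_neg at hpend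
    have htwo : ∀ w ∈ A, ∀ z ∈ A ∩ G.neighborFinset w, ∃ z' ∈ A ∩ G.neighborFinset w, z' ≠ z := by
      intro w hw z hz
      by_contra hcon
      push_neg at hcon
      have hzA : z ∈ A := (Finset.mem_inter.mp hz).1
      exact hpend z hzA w hw (Finset.eq_singleton_iff_unique_mem.mpr ⟨hz, fun y hy => hcon y hy⟩)
    obtain ⟨v, hvA⟩ := hAne
    set D := (A ∩ G.neighborFinset v).filter
      (fun u => A ∩ G.neighborFinset u ⊆ insert v (A ∩ G.neighborFinset v)) with hD
    have hDN : D ⊆ A ∩ G.neighborFinset v := Finset.filter_subset _ _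
    have hvD : v ∉ D := by
      intro h
      have := (Finset.mem_inter.mp (hDN h)).2
      simp at this
    rcases D.eq_empty_or_nonempty with hDe | hDne
    · -- D empty: take an edge {v, u}
      obtain ⟨u, hu⟩ := hNne v hvA
      obtain ⟨huA, huN⟩ := Finset.mem_inter.mp hu
      have hadj : G.Adj v u := (SimpleGraph.mem_neighborFinset G v u).mp huN
      have hvu : v ≠ u := hadj.ne
      refine ⟨{v, u}, ?_, ?_, ⟨v, by simp, ?_⟩, ?_⟩
      · intro y hy
        rcases Finset.mem_insert.mp hy with rfl | hy
        · exact hvA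
        · rw [Finset.mem_singleton.mp hy]; exact huA
      · rw [Finset.card_insert_of_notMem (by simp [hvu]), Finset.card_singleton]
      · intro y hy hyv
        rcases Finset.mem_insert.mp hy with rfl | hy
        · exact absurd rfl hyv
        · rw [Finset.mem_singleton.mp hy]; exact hadj
      · intro w hw
        obtain ⟨hwA, hwS⟩ := Finset.mem_sdiff.mp hw
        have hwv : w ≠ v := fun h => hwS (by simp [h])
        have hwu : w ≠ u := fun h => hwS (by simp [h])
        by_contra hcon
        push_neg at hcon
        -- all A-neighbors of w are in {v, u}
        have hsub : A ∩ G.neighborFinset w ⊆ {v, u} := by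
          intro z hz
          obtain ⟨hzA, hzN⟩ := Finset.mem_inter.mp hz
          by_contra hzS
          exact hcon z (Finset.mem_sdiff.mpr ⟨hzA, hzS⟩) ((SimpleGraph.mem_neighborFinset G w z).mp hzN)
        obtain ⟨z1, hz1⟩ := hNne w hwA
        obtain ⟨z2, hz2, hz21⟩ := htwo w hwA z1 hz1
        have h1 : z1 = v ∨ z1 = u := by have := hsub hz1; simpa using this
        have h2 : z2 = v ∨ z2 = u := by have := hsub hz2; simpa using this
        have hvw : v ∈ A ∩ G.neighborFinset w ∧ u ∈ A ∩ G.neighborFinset w := by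
          rcases h1 with rfl | rfl <;> rcases h2 with rfl | rfl <;> first | exact absurd rfl hz21 | exact ⟨hz1, hz2⟩ | exact ⟨hz2, hz1⟩
        -- then w ∈ D, contradiction with D = ∅
        have hwD : w ∈ D := by
          rw [hD]
          refine Finset.mem_filter.mpr ⟨?_, ?_⟩
          · have := (Finset.mem_inter.mp hvw.1).2
            simp only [SimpleGraph.mem_neighborFinset] at this
            exact Finset.mem_inter.mpr ⟨hwA, (SimpleGraph.mem_neighborFinset G v w).mpr this.symm⟩
          · intro z hz
            have := hsub hz
            rcases Finset.mem_insert.mp this with rfl | hzz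
            · exact Finset.mem_insert_self _ _
            · rw [Finset.mem_singleton.mp hzz]
              exact Finset.mem_insert_of_mem hu
        rw [hDe] at hwD
        exact absurd hwD (Finset.notMem_empty w)
    · -- D nonempty: take S = insert v D
      refine ⟨insert v D, ?_, ?_, ⟨v, Finset.mem_insert_self _ _, ?_⟩, ?_⟩
      · intro y hy
        rcases Finset.mem_insert.mp hy with rfl | hy
        · exact hvA
        · exact (Finset.mem_inter.mp (hDN hy)).1
      · rw [Finset.card_insert_of_notMem hvD]
        have : 0 < D.card := Finset.card_pos.mpr hDne
        omega
      · intro y hy hyv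
        rcases Finset.mem_insert.mp hy with rfl | hy
        · exact absurd rfl hyv
        · exact (SimpleGraph.mem_neighborFinset G v y).mp (Finset.mem_inter.mp (hDN hy)).2
      · intro w hw
        obtain ⟨hwA, hwS⟩ := Finset.mem_sdiff.mp hw
        have hwv : w ≠ v := fun h => hwS (h ▸ Finset.mem_insert_self _ _)
        have hwD : w ∉ D := fun h => hwS (Finset.mem_insert_of_mem h)
        by_cases hwN : w ∈ A ∩ G.neighborFinset v
        · -- w adjacent to v but not in D: has A-neighbor outside N[v]
          have : ¬ (A ∩ G.neighborFinset w ⊆ insert v (A ∩ G.neighborFinset v)) := by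
            intro hsub
            exact hwD (Finset.mem_filter.mpr ⟨hwN, hsub⟩)
          obtain ⟨z, hz, hzout⟩ := Finset.not_subset.mp this
          obtain ⟨hzA, hzN⟩ := Finset.mem_inter.mp hz
          refine ⟨z, Finset.mem_sdiff.mpr ⟨hzA, ?_⟩, (SimpleGraph.mem_neighborFinset G w z).mp hzN⟩
          intro hzS
          rcases Finset.mem_insert.mp hzS with rfl | hzD
          · exact hzout (Finset.mem_insert_self _ _)
          · exact hzout (Finset.mem_insert_of_mem (hDN hzD))
        · -- w not adjacent to v: any A-neighbor works
          obtain ⟨z, hz⟩ := hNne w hwA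
          obtain ⟨hzA, hzN⟩ := Finset.mem_inter.mp hz
          have hzadj : G.Adj w z := (SimpleGraph.mem_neighborFinset G w z).mp hzN
          refine ⟨z, Finset.mem_sdiff.mpr ⟨hzA, ?_⟩, hzadj⟩
          intro hzS
          rcases Finset.mem_insert.mp hzS with rfl | hzD
          · exact hwN (Finset.mem_inter.mpr ⟨hwA, (SimpleGraph.mem_neighborFinset G z w).mpr hzadj.symm⟩)
          · have hsub := (Finset.mem_filter.mp hzD).2
            have hwmem : w ∈ A ∩ G.neighborFinset z :=
              Finset.mem_inter.mpr ⟨hwA, (SimpleGraph.mem_neighborFinset G z w).mpr hzadj.symm⟩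
            have := hsub hwmem
            rcases Finset.mem_insert.mp this with rfl | hh
            · exact hwv rfl
            · exact hwN hh


private lemma exists_sp :
    ∀ (A : Finset V), (∀ v ∈ A, ∃ u ∈ A, G.Adj v u) →
    ∃ P : Finset (Finset V),
      (∀ S ∈ P, S ⊆ A) ∧
      (∀ v ∈ A, ∃! S : Finset V, S ∈ P ∧ v ∈ S) ∧
      (∀ S ∈ P, 2 ≤ S.card) ∧
      (∀ S ∈ P, ∃ c ∈ S, ∀ v ∈ S, v ≠ c → G.Adj c v) := by
  intro A
  induction A using Finset.strongInduction with
  | _ A ih =>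
  intro hA
  rcases A.eq_empty_or_nonempty with rfl | hAne
  · exact ⟨∅, by simp, by simp, by simp, by simp⟩
  have key : ∃ S : Finset V, S ⊆ A ∧ 2 ≤ S.card ∧
      (∃ c ∈ S, ∀ v ∈ S, v ≠ c → G.Adj c v) ∧
      (∀ w ∈ A \ S, ∃ u ∈ A \ S, G.Adj w u) := key_claim G A hA hAne
  obtain ⟨S, hSA, hS2, hstar, hrest⟩ := key
  have hSne : S.Nonempty := Finset.card_pos.mp (by omega)
  have hss : A \ S ⊂ A := Finset.sdiff_ssubset hSA hSne
  obtain ⟨P', hP'sub, hP'cov, hP'2, hP'star⟩ := ih _ hss hrest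
  refine ⟨insert S P', ?_, ?_, ?_, ?_⟩
  · intro T hT
    rcases Finset.mem_insert.mp hT with rfl | hT
    · exact hSA
    · exact (hP'sub T hT).trans (Finset.sdiff_subset)
  · intro v hv
    by_cases hvS : v ∈ S
    · refine ⟨S, ⟨Finset.mem_insert_self _ _, hvS⟩, ?_⟩
      rintro T ⟨hT, hvT⟩
      rcases Finset.mem_insert.mp hT with rfl | hT
      · rfl
      · exact absurd ((hP'sub T hT) hvT) (by simp [hvS])
    · obtain ⟨T, ⟨hT, hvT⟩, huniq⟩ := hP'cov v (Finset.mem_sdiff.mpr ⟨hv, hvS⟩)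
      refine ⟨T, ⟨Finset.mem_insert_of_mem hT, hvT⟩, ?_⟩
      rintro U ⟨hU, hvU⟩
      rcases Finset.mem_insert.mp hU with rfl | hU
      · exact absurd hvU hvS
      · exact huniq U ⟨hU, hvU⟩
  · intro T hT
    rcases Finset.mem_insert.mp hT with rfl | hT
    · exact hS2
    · exact hP'2 T hT
  · intro T hT
    rcases Finset.mem_insert.mp hT with rfl | hT
    · exact hstar
    · exact hP'star T hT

end Aux





/-- For a nontrivial finite simple graph without isolated vertices,
`⌈n(G)/ν(G)⌉ − 1 ≤ σ(G) ≤ Δ(G)`.  (The ceiling `⌈n/ν⌉` is expressed as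
`(n + ν − 1) / ν` using natural-number division.) -/
theorem stmt8 {V : Type*} [Fintype V] [DecidableEq V] (G : SimpleGraph V)
    [DecidableRel G.Adj]
    (h2 : 2 ≤ Fintype.card V) (hiso : ∀ v : V, ∃ u : V, G.Adj v u) :
    (Fintype.card V + matchingNumber G - 1) / matchingNumber G - 1 ≤ starPartitionWidth G ∧
      starPartitionWidth G ≤ G.maxDegree := by
  classical
  -- existence of a star partition
  obtain ⟨P0, hsub0, hcov0, h20, hstar0⟩ := exists_sp G Finset.univ
    (by intro v _; obtain ⟨u, hu⟩ := hiso v; exact ⟨u, Finset.mem_univ u, hu⟩)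
  have hP0 : IsStarPartition G P0 :=
    ⟨fun v => hcov0 v (Finset.mem_univ v), h20, hstar0⟩
  -- every part of a star partition has at most Δ+1 vertices
  have hbound : ∀ P : Finset (Finset V), IsStarPartition G P →
      ∀ S ∈ P, S.card ≤ G.maxDegree + 1 := by
    rintro P ⟨hcov, hc2, hstar⟩ S hS
    obtain ⟨c, hc, hadj⟩ := hstar S hS
    have hsub : S.erase c ⊆ G.neighborFinset c := by
      intro v hv
      exact (SimpleGraph.mem_neighborFinset G c v).mpr
        (hadj v (Finset.mem_of_mem_erase hv) (Finset.ne_of_mem_erase hv))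
    have h1 : (S.erase c).card ≤ G.degree c := by
      rw [← SimpleGraph.card_neighborFinset_eq_degree]
      exact Finset.card_le_card hsub
    have h2 : (S.erase c).card + 1 = S.card := Finset.card_erase_add_one hc
    have := G.degree_le_maxDegree c
    omega
  have hΔmem : G.maxDegree ∈
      {k : ℕ | ∃ P : Finset (Finset V), IsStarPartition G P ∧ ∀ S ∈ P, S.card ≤ k + 1} :=
    ⟨P0, hP0, hbound P0 hP0⟩
  have hupper : starPartitionWidth G ≤ G.maxDegree := Nat.sInf_le hΔmem
  refine ⟨?_, hupper⟩
  -- the width is attained by some partition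
  have hσmem := Nat.sInf_mem (⟨G.maxDegree, hΔmem⟩ : Set.Nonempty
      {k : ℕ | ∃ P : Finset (Finset V), IsStarPartition G P ∧ ∀ S ∈ P, S.card ≤ k + 1})
  obtain ⟨P, hP, hcard⟩ := hσmem
  -- matchings are bounded by the number of edges
  have hMbdd : BddAbove {n : ℕ | ∃ M : Finset (Sym2 V), IsMatchingSet G M ∧ M.card = n} := by
    refine ⟨G.edgeFinset.card, ?_⟩
    rintro n ⟨M, ⟨hM1, _⟩, rfl⟩
    exact Finset.card_le_card fun e he => SimpleGraph.mem_edgeFinset.mpr (hM1 e he)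
  -- ν ≥ 1
  have hν1 : 1 ≤ matchingNumber G := by
    have : Nonempty V := Fintype.card_pos_iff.mp (by omega)
    obtain ⟨v⟩ := this
    obtain ⟨u, hadj⟩ := hiso v
    refine le_csSup hMbdd ⟨{s(v, u)}, ⟨?_, ?_⟩, Finset.card_singleton _⟩
    · intro e he
      rw [Finset.mem_singleton] at he
      subst he
      exact hadj
    · intro e he f hf hef
      rw [Finset.mem_singleton] at he hf
      exact absurd (he.trans hf.symm) hef
  -- uniqueness of the containing part
  have huniq : ∀ v : V, ∀ S ∈ P, v ∈ S → ∀ T ∈ P, v ∈ T → S = T := by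
    intro v S hS hvS T hT hvT
    obtain ⟨W, _, hu⟩ := hP.1 v
    rw [hu S ⟨hS, hvS⟩, hu T ⟨hT, hvT⟩]
  -- choose an edge in each part
  have hchoice : ∀ S : {x // x ∈ P}, ∃ q : V × V,
      q.1 ∈ S.1 ∧ q.2 ∈ S.1 ∧ G.Adj q.1 q.2 := by
    rintro ⟨S, hS⟩
    obtain ⟨c, hc, hadj⟩ := hP.2.2 S hS
    have h2 := hP.2.1 S hS
    have hne : (S.erase c).Nonempty := by
      rw [← Finset.card_pos]
      have := Finset.card_erase_add_one hc
      omega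
    obtain ⟨w, hw⟩ := hne
    exact ⟨(c, w), hc, Finset.mem_of_mem_erase hw,
      hadj w (Finset.mem_of_mem_erase hw) (Finset.ne_of_mem_erase hw)⟩
  choose q hq1 hq2 hq3 using hchoice
  set M : Finset (Sym2 V) := P.attach.image (fun S => s((q S).1, (q S).2)) with hM
  have hkey : ∀ S T : {x // x ∈ P}, ∀ v : V,
      v ∈ s((q S).1, (q S).2) → v ∈ s((q T).1, (q T).2) → S = T := by
    intro S T v hvS hvT
    have hvS' : v ∈ S.1 := by
      rcases Sym2.mem_iff.mp hvS with rfl | rfl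
      · exact hq1 S
      · exact hq2 S
    have hvT' : v ∈ T.1 := by
      rcases Sym2.mem_iff.mp hvT with rfl | rfl
      · exact hq1 T
      · exact hq2 T
    exact Subtype.ext (huniq v S.1 S.2 hvS' T.1 T.2 hvT')
  have hMset : IsMatchingSet G M := by
    constructor
    · intro e he
      obtain ⟨S, _, rfl⟩ := Finset.mem_image.mp he
      exact hq3 S
    · intro e he f hf hef v hve hvf
      obtain ⟨S, _, rfl⟩ := Finset.mem_image.mp he
      obtain ⟨T, _, rfl⟩ := Finset.mem_image.mp hf
      exact hef (by rw [hkey S T v hve hvf])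
  have hMcard : M.card = P.card := by
    rw [hM, Finset.card_image_of_injOn, Finset.card_attach]
    intro S _ T _ heq
    simp only at heq
    refine hkey S T (q S).1 (Sym2.mem_mk_left _ _) ?_
    rw [← heq]
    exact Sym2.mem_mk_left _ _
  have hPν : P.card ≤ matchingNumber G := le_csSup hMbdd ⟨M, hMset, hMcard⟩
  -- counting vertices
  have huniv : (Finset.univ : Finset V) = P.biUnion id := by
    ext v
    simp only [Finset.mem_biUnion, id, Finset.mem_univ, true_iff]
    obtain ⟨S, ⟨hS, hvS⟩, _⟩ := hP.1 v
    exact ⟨S, hS, hvS⟩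
  have hdisj : ∀ S ∈ P, ∀ T ∈ P, S ≠ T → Disjoint (id S) (id T) := by
    intro S hS T hT hST
    rw [Finset.disjoint_left]
    intro v hvS hvT
    exact hST (huniq v S hS hvS T hT hvT)
  have hn : Fintype.card V = ∑ S ∈ P, S.card := by
    rw [← Finset.card_univ, huniv, Finset.card_biUnion hdisj]; rfl
  have hnle : Fintype.card V ≤ P.card * (starPartitionWidth G + 1) := by
    rw [hn]
    calc ∑ S ∈ P, S.card ≤ ∑ _S ∈ P, (starPartitionWidth G + 1) :=
          Finset.sum_le_sum hcard
      _ = P.card * (starPartitionWidth G + 1) := by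
          rw [Finset.sum_const, smul_eq_mul]
  have hnle2 : Fintype.card V ≤ matchingNumber G * (starPartitionWidth G + 1) :=
    hnle.trans (Nat.mul_le_mul_right _ hPν)
  have hdiv : (Fintype.card V + matchingNumber G - 1) / matchingNumber G ≤
      starPartitionWidth G + 1 := by
    rw [Nat.div_le_iff_le_mul_add_pred (by omega : 0 < matchingNumber G)]
    calc Fintype.card V + matchingNumber G - 1
        = Fintype.card V + (matchingNumber G - 1) := by omega
      _ ≤ matchingNumber G * (starPartitionWidth G + 1) + (matchingNumber G - 1) :=
          Nat.add_le_add_right hnle2 _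
  omega
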